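/- (One-step quadratic contraction for exact DPO-Mix-P.) Let θ ∈ ℝ^𝒴 and suppose there is s > 0 with σ'(β(θ_a − θ_{a'})) ≥ s for all a, a' ∈ 𝒴. Let θ' be obtained by one exact DPO-Mix-P step with learning rate η = 1/(β²A): θ'_a = θ_a + (1/(βA)) Σ_{a''∈𝒴} Δ(a,a'';θ)/σ'(β(θ_a − θ_{a''})) for every a. Then for all a, a' ∈ 𝒴, |δ(a,a';θ')| ≤ (1/(6√3 · s)) · max_{b,b'∈𝒴} δ(b,b';θ)². -/

import Mathlib

/-- The sigmoid function. -/
noncomputable def sig (x : ℝ) : ℝ := 1 / (1 + Real.exp (-x))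

/-- The derivative of the sigmoid function. -/
noncomputable def sig' (x : ℝ) : ℝ := sig x * (1 - sig x)

lemma one_add_exp_pos (x : ℝ) : 0 < 1 + Real.exp (-x) := by positivity

lemma sig_pos (x : ℝ) : 0 < sig x := by
  unfold sig; positivity

lemma sig_lt_one (x : ℝ) : sig x < 1 := by
  unfold sig
  rw [div_lt_one (one_add_exp_pos x)]
  linarith [Real.exp_pos (-x)]

lemma hasDerivAt_sig (x : ℝ) : HasDerivAt sig (sig' x) x := by
  have h1 : HasDerivAt (fun x : ℝ => 1 + Real.exp (-x)) (-Real.exp (-x)) x := by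
    simpa using (Real.hasDerivAt_exp (-x)).comp x ((hasDerivAt_id x).neg) |>.const_add 1
  have h2 := h1.fun_inv (ne_of_gt (one_add_exp_pos x))
  have : sig = fun x => (1 + Real.exp (-x))⁻¹ := by
    funext y; simp [sig, one_div]
  rw [this]
  refine h2.congr_deriv ?_
  have hne := ne_of_gt (one_add_exp_pos x)
  simp only [sig', sig]
  field_simp
  ring

lemma hasDerivAt_sig' (x : ℝ) : HasDerivAt sig' (sig' x * (1 - 2 * sig x)) x := by
  have h := (hasDerivAt_sig x).fun_mul ((hasDerivAt_sig x).const_sub 1)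
  refine h.congr_deriv ?_
  simp only [sig']
  ring

lemma abs_sig''_le (x : ℝ) : |sig' x * (1 - 2 * sig x)| ≤ 1 / (6 * Real.sqrt 3) := by
  have h3 : (0:ℝ) < Real.sqrt 3 := Real.sqrt_pos.mpr (by norm_num)
  have h3' : Real.sqrt 3 ^ 2 = 3 := Real.sq_sqrt (by norm_num)
  have hu0 := sig_pos x
  have hu1 := sig_lt_one x
  set u := sig x
  have hsq : (u * (1 - u) * (1 - 2 * u)) ^ 2 ≤ (1 / (6 * Real.sqrt 3)) ^ 2 := by
    have : (1 / (6 * Real.sqrt 3)) ^ 2 = 1 / 108 := by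
      rw [div_pow, mul_pow, h3']; norm_num
    rw [this]
    nlinarith [sq_nonneg (u * (1-u) * (1-2*u)), sq_nonneg ((1-2*u)^2 - 1/3), sq_nonneg u, sq_nonneg (1-u), mul_pos hu0 (by linarith : (0:ℝ) < 1 - u)]
  have hss : sig' x * (1 - 2 * u) = u * (1 - u) * (1 - 2 * u) := by rfl
  rw [hss, abs_le]
  exact abs_le_of_sq_le_sq' hsq (by positivity)

lemma sig'_lipschitz (a b : ℝ) : |sig' b - sig' a| ≤ (1 / (6 * Real.sqrt 3)) * |b - a| := by
  have := Convex.norm_image_sub_le_of_norm_hasDerivWithin_le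
    (f := sig') (f' := fun x => sig' x * (1 - 2 * sig x)) (s := Set.univ)
    (fun x _ => (hasDerivAt_sig' x).hasDerivWithinAt)
    (fun x _ => by rw [Real.norm_eq_abs]; exact abs_sig''_le x)
    convex_univ (Set.mem_univ a) (Set.mem_univ b)
  simpa [Real.norm_eq_abs] using this

lemma sig'_cont : Continuous sig' :=
  continuous_iff_continuousAt.mpr fun x => (hasDerivAt_sig' x).continuousAt

open intervalIntegral MeasureTheory in
lemma sig_taylor (z h : ℝ) :
    |sig (z + h) - sig z - sig' z * h| ≤ 1 / (12 * Real.sqrt 3) * h ^ 2 := by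
  have h3 : (0:ℝ) < Real.sqrt 3 := Real.sqrt_pos.mpr (by norm_num)
  set M : ℝ := 1 / (6 * Real.sqrt 3) with hM
  have hM0 : 0 ≤ M := by positivity
  have hF : ∀ t : ℝ, HasDerivAt (fun t => sig (z + t) - sig' z * t)
      (sig' (z + t) - sig' z) t := by
    intro t
    have h1 : HasDerivAt (fun t : ℝ => sig (z + t)) (sig' (z + t)) t := by
      simpa [Function.comp_def] using (hasDerivAt_sig (z + t)).comp t ((hasDerivAt_id t).const_add z)
    simpa using h1.fun_sub ((hasDerivAt_id t).const_mul (sig' z))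
  have hcont : Continuous fun t => sig' (z + t) - sig' z :=
    (sig'_cont.comp (continuous_const.add continuous_id)).sub continuous_const
  have hftc : ∫ t in (0:ℝ)..h, (sig' (z + t) - sig' z) =
      sig (z + h) - sig z - sig' z * h := by
    rw [integral_eq_sub_of_hasDerivAt (fun t _ => hF t) (hcont.intervalIntegrable 0 h)]
    simp [sig]
    ring
  have hg : IntervalIntegrable (fun t => M * |t|) volume 0 h :=
    (continuous_const.mul continuous_abs).intervalIntegrable 0 h
  have hb := norm_integral_le_abs_of_norm_le (μ := volume) (a := 0) (b := h)
    (f := fun t => sig' (z + t) - sig' z) (g := fun t => M * |t|)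
    (ae_of_all _ fun t => by
      have h2 := sig'_lipschitz z (z + t)
      rw [Real.norm_eq_abs, hM]
      simpa using h2) hg
  have habs : abs (∫ t in (0:ℝ)..h, M * |t|) = M * (h ^ 2 / 2) := by
    rw [intervalIntegral.integral_const_mul]
    rcases le_or_gt 0 h with hh | hh
    · have he : Set.EqOn (fun t : ℝ => |t|) id (Set.uIcc 0 h) := by
        intro t ht
        rw [Set.uIcc_of_le hh] at ht
        exact abs_of_nonneg ht.1
      rw [integral_congr he]
      simp only [id_eq, integral_id]
      have he2 : ((h:ℝ)^2 - 0^2)/2 = h^2/2 := by ring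
      rw [he2, abs_mul, abs_of_nonneg hM0, abs_of_nonneg (by positivity : (0:ℝ) ≤ h^2/2)]
    · have he : Set.EqOn (fun t : ℝ => |t|) (fun t => -t) (Set.uIcc 0 h) := by
        intro t ht
        rw [Set.uIcc_of_ge hh.le] at ht
        exact abs_of_nonpos ht.2
      rw [integral_congr he]
      have hneg : ∫ t in (0:ℝ)..h, -t = -(h ^ 2 / 2) := by
        rw [intervalIntegral.integral_neg, integral_id]; ring
      rw [hneg, abs_mul, abs_of_nonneg hM0, abs_neg,
        abs_of_nonneg (by positivity : (0:ℝ) ≤ h^2/2)]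
  rw [hftc, Real.norm_eq_abs] at hb
  calc |sig (z + h) - sig z - sig' z * h| ≤ M * (h ^ 2 / 2) := habs ▸ hb
    _ = 1 / (12 * Real.sqrt 3) * h ^ 2 := by rw [hM]; ring


/-- **One-step quadratic contraction for exact DPO-Mix-P.**
If `σ'(β(θ_a - θ_{a'})) ≥ s > 0` for all pairs, then one exact DPO-Mix-P
step with learning rate `η = 1/(β²A)` contracts the reward-gap errors
quadratically, with factor `1/(6√3·s)`. -/
theorem dpo_mix_p_one_step_contraction
    {Y : Type*} [Fintype Y] [Nonempty Y]
    (A : ℕ) (hA : A = Fintype.card Y)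
    (r : Y → ℝ) (hr : ∀ a, 0 ≤ r a ∧ r a ≤ 1)
    (β : ℝ) (hβ : 0 < β)
    (s : ℝ) (hs : 0 < s)
    (θ θ' : Y → ℝ)
    (hσ' : ∀ a a' : Y, s ≤ sig' (β * (θ a - θ a')))
    (hupd : ∀ a, θ' a = θ a +
      (1 / (β * A)) * ∑ a'' : Y,
        (sig (r a - r a'') - sig (β * (θ a - θ a''))) /
          sig' (β * (θ a - θ a''))) :
    ∀ a a' : Y,
      |r a - r a' - β * (θ' a - θ' a')| ≤
        (1 / (6 * Real.sqrt 3 * s)) *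
          ⨆ p : Y × Y, (r p.1 - r p.2 - β * (θ p.1 - θ p.2)) ^ 2 := by
  intro a a'
  have hcard : 0 < A := by rw [hA]; exact Fintype.card_pos
  have hA0 : (0:ℝ) < (A:ℝ) := by exact_mod_cast hcard
  have h3 : (0:ℝ) < Real.sqrt 3 := Real.sqrt_pos.mpr (by norm_num)
  set δ : Y → Y → ℝ := fun x y => r x - r y - β * (θ x - θ y) with hδ
  set D : ℝ := ⨆ p : Y × Y, (r p.1 - r p.2 - β * (θ p.1 - θ p.2)) ^ 2 with hD
  have hDle : ∀ x y : Y, δ x y ^ 2 ≤ D := fun x y => by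
    have h := le_ciSup (f := fun p : Y × Y => (r p.1 - r p.2 - β * (θ p.1 - θ p.2)) ^ 2)
      (Set.Finite.bddAbove (Set.finite_range _)) (⟨x, y⟩ : Y × Y)
    simp only [hδ, hD]
    exact h
  have hD0 : 0 ≤ D :=
    le_trans (sq_nonneg _) (hDle (Classical.arbitrary Y) (Classical.arbitrary Y))
  set E : Y → Y → ℝ := fun x y =>
    (sig (r x - r y) - sig (β * (θ x - θ y))) / sig' (β * (θ x - θ y)) - δ x y with hE
  -- bound on E
  have hEbd : ∀ x y : Y, |E x y| ≤ 1 / (12 * Real.sqrt 3) * D / s := by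
    intro x y
    have hspos : 0 < sig' (β * (θ x - θ y)) := lt_of_lt_of_le hs (hσ' x y)
    have key : r x - r y = β * (θ x - θ y) + δ x y := by simp only [hδ]; ring
    have hnum := sig_taylor (β * (θ x - θ y)) (δ x y)
    rw [← key] at hnum
    have hrw : E x y = (sig (r x - r y) - sig (β * (θ x - θ y))
        - sig' (β * (θ x - θ y)) * δ x y) / sig' (β * (θ x - θ y)) := by
      simp only [hE]
      field_simp
    rw [hrw, abs_div, abs_of_pos hspos]
    have h1 : |sig (r x - r y) - sig (β * (θ x - θ y)) - sig' (β * (θ x - θ y)) * δ x y|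
        ≤ 1 / (12 * Real.sqrt 3) * D := by
      refine hnum.trans ?_
      exact mul_le_mul_of_nonneg_left (hDle x y) (by positivity)
    exact div_le_div₀ (by positivity) h1 hs (hσ' x y)
  -- sums
  set P : Y → ℝ := fun x => ∑ b : Y, δ x b with hP
  set Q : Y → ℝ := fun x => ∑ b : Y, E x b with hQ
  have hPQ : ∀ x, θ' x = θ x + (1 / (β * A)) * (P x + Q x) := by
    intro x
    rw [hupd x, hP, hQ, ← Finset.sum_add_distrib]
    congr 1
    congr 1
    apply Finset.sum_congr rfl
    intro b _
    simp only [hE]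
    ring
  have hPdiff : P a - P a' = A * δ a a' := by
    rw [hP]
    simp only
    rw [← Finset.sum_sub_distrib]
    have : ∀ b ∈ Finset.univ, δ a b - δ a' b = δ a a' := fun b _ => by
      simp only [hδ]; ring
    rw [Finset.sum_congr rfl this, Finset.sum_const, Finset.card_univ, ← hA,
      nsmul_eq_mul]
  have hmain : r a - r a' - β * (θ' a - θ' a') = -((1 / (A:ℝ)) * (Q a - Q a')) := by
    have expand : r a - r a' - β * (θ' a - θ' a')
        = δ a a' - (1 / (A:ℝ)) * (P a - P a') - (1 / (A:ℝ)) * (Q a - Q a') := by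
      rw [hPQ a, hPQ a']
      simp only [hδ]
      field_simp
      ring
    rw [expand, hPdiff]
    field_simp
    ring
  rw [hmain, abs_neg, abs_mul, abs_of_pos (by positivity : (0:ℝ) < 1 / (A:ℝ))]
  have hQbd : ∀ x : Y, |Q x| ≤ (A:ℝ) * (1 / (12 * Real.sqrt 3) * D / s) := by
    intro x
    refine (Finset.abs_sum_le_sum_abs _ _).trans ?_
    refine le_trans (Finset.sum_le_sum fun b _ => hEbd x b) ?_
    rw [Finset.sum_const, Finset.card_univ, ← hA, nsmul_eq_mul]
  have habs : |Q a - Q a'| ≤ 2 * ((A:ℝ) * (1 / (12 * Real.sqrt 3) * D / s)) := by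
    calc |Q a - Q a'| ≤ |Q a| + |Q a'| := abs_sub _ _
      _ ≤ _ := by linarith [hQbd a, hQbd a']
  calc (1 / (A:ℝ)) * |Q a - Q a'|
      ≤ (1 / (A:ℝ)) * (2 * ((A:ℝ) * (1 / (12 * Real.sqrt 3) * D / s))) := by
        apply mul_le_mul_of_nonneg_left habs (by positivity)
    _ = 1 / (6 * Real.sqrt 3 * s) * D := by field_simp; ring
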